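/- Let n ≥ 2, let 1 ≤ p ≤ n−1, let l ≥ 0 be an integer, and let g(z) = Σ_{j=0}^{⌊l/2⌋} a_j z^{l−2j} ∈ Pol_l[z]_even. Then x_p·((I_l g)(−Δ', ∂_n) δ) = ∂_p((I_{l−2}((l−θ)g))(−Δ', ∂_n) δ) as tempered distributions on ℝ^n (for l ≤ 1 the right-hand side is 0, since (l−θ)g = 0). -/

import Mathlib

/-- Partial derivative ∂_p of a complex-valued function on ℝ^n. -/
noncomputable def pd {n : ℕ} (p : Fin n) (f : (Fin n → ℝ) → ℂ) : (Fin n → ℝ) → ℂ :=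
  fun x => fderiv ℝ f x (Pi.single p 1)

/-- Δ' = ∂_1² + ⋯ + ∂_{n−1}², the Laplacian in the first n−1 variables on ℝ^n. -/
noncomputable def lapP {n : ℕ} (f : (Fin n → ℝ) → ℂ) : (Fin n → ℝ) → ℂ :=
  fun x => ∑ j ∈ Finset.univ.filter (fun j : Fin n => (j : ℕ) < n - 1), pd j (pd j f) x

/-- ∂_n, the partial derivative in the last variable on ℝ^n. -/
noncomputable def pdLast {n : ℕ} (f : (Fin n → ℝ) → ℂ) : (Fin n → ℝ) → ℂ :=
  if h : 0 < n then pd ⟨n - 1, by omega⟩ f else 0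

/-- The action of the distribution `(I_l g)(−Δ', ∂_n) δ = Σ_j a_j (−1)^j (Δ')^j ∂_n^{l−2j} δ`
(with `a_j` the coefficient of `z^{l−2j}` in `g`) on a test function `φ`; each `∂`
contributes a sign `−1` and δ evaluates at 0.  By convention it is 0 for `l < 0`. -/
noncomputable def IOpAct (n : ℕ) (l : ℤ) (g : Polynomial ℂ) (φ : (Fin n → ℝ) → ℂ) : ℂ :=
  if 0 ≤ l then
    ∑ j ∈ Finset.range (l.toNat / 2 + 1),
      g.coeff (l.toNat - 2 * j) *
        ((-1 : ℂ) ^ j * ((-1 : ℂ) ^ (l.toNat - 2 * j) *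
          (pdLast (n := n))^[l.toNat - 2 * j] ((lapP (n := n))^[j] φ) 0))
  else 0

section Aux

open scoped ContDiff

variable {n : ℕ}

private lemma inf1 : (1 : WithTop ℕ∞) ≤ ((⊤:ℕ∞) : WithTop ℕ∞) := by
  exact_mod_cast ENat.natCast_le_of_coe_top_le_withTop le_rfl 1

private lemma inf2 : (2 : WithTop ℕ∞) ≤ ((⊤:ℕ∞) : WithTop ℕ∞) := by
  exact_mod_cast ENat.natCast_le_of_coe_top_le_withTop le_rfl 2

private lemma contDiff_pd {f : (Fin n → ℝ) → ℂ} (hf : ContDiff ℝ (⊤:ℕ∞) f) (p : Fin n) :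
    ContDiff ℝ (⊤:ℕ∞) (pd p f) :=
  (hf.fderiv_right ENat.coe_top_add_one.le).clm_apply contDiff_const

private lemma diff_of_cd {f : (Fin n → ℝ) → ℂ} (hf : ContDiff ℝ (⊤:ℕ∞) f) :
    Differentiable ℝ f := hf.differentiable (by simp)

private lemma pd_comm {f : (Fin n → ℝ) → ℂ} (hf : ContDiff ℝ (⊤:ℕ∞) f) (q r : Fin n) :
    pd q (pd r f) = pd r (pd q f) := by
  funext x
  have hd : DifferentiableAt ℝ (fderiv ℝ f) x :=
    ((hf.fderiv_right ENat.coe_top_add_one.le).differentiable (by simp)).differentiableAt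
  have h1 : ∀ v : Fin n → ℝ, fderiv ℝ (fun y => fderiv ℝ f y v) x =
      (fderiv ℝ (fderiv ℝ f) x).flip v := by
    intro v
    rw [fderiv_clm_apply hd (differentiableAt_const v)]
    ext w; simp
  have hsym := (hf.contDiffAt (x := x)).isSymmSndFDerivAt (by simpa using inf2) (Pi.single q 1) (Pi.single r 1)
  unfold pd
  rw [h1, h1]
  simpa using hsym

private lemma pd_add {f g : (Fin n → ℝ) → ℂ} (hf : Differentiable ℝ f)
    (hg : Differentiable ℝ g) (p : Fin n) :
    pd p (fun x => f x + g x) = fun x => pd p f x + pd p g x := by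
  funext x
  unfold pd
  rw [fderiv_fun_add (hf x) (hg x)]
  simp

private lemma pd_const_mul {f : (Fin n → ℝ) → ℂ} (hf : Differentiable ℝ f) (c : ℂ) (p : Fin n) :
    pd p (fun x => c * f x) = fun x => c * pd p f x := by
  funext x
  unfold pd
  rw [fderiv_const_mul (hf x) c]
  simp

private lemma contDiff_coord (p : Fin n) :
    ContDiff ℝ (⊤:ℕ∞) (fun x : Fin n → ℝ => ((x p : ℝ) : ℂ)) :=
  Complex.ofRealCLM.contDiff.comp (ContinuousLinearMap.proj (R := ℝ) (φ := fun _ : Fin n => ℝ) p).contDiff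

private lemma pd_coord_mul {f : (Fin n → ℝ) → ℂ} (hf : Differentiable ℝ f) (p q : Fin n) :
    pd q (fun x => ((x p : ℝ) : ℂ) * f x)
      = fun x => ((x p : ℝ) : ℂ) * pd q f x + (if q = p then f x else 0) := by
  funext x
  have hc : HasFDerivAt (fun x : Fin n → ℝ => ((x p : ℝ) : ℂ))
      (Complex.ofRealCLM.comp (ContinuousLinearMap.proj p)) x := by
    exact (Complex.ofRealCLM.comp
      (ContinuousLinearMap.proj p : (Fin n → ℝ) →L[ℝ] ℝ)).hasFDerivAt
  have h := (hc.fun_mul (hf x).hasFDerivAt).fderiv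
  unfold pd
  rw [h]
  by_cases hq : q = p <;>
    simp [hq, Pi.single_apply, smul_eq_mul, mul_comm]

private lemma pd_sum {ι : Type*} (s : Finset ι) (F : ι → (Fin n → ℝ) → ℂ)
    (hF : ∀ i ∈ s, Differentiable ℝ (F i)) (p : Fin n) :
    pd p (fun x => ∑ i ∈ s, F i x) = fun x => ∑ i ∈ s, pd p (F i) x := by
  funext x
  unfold pd
  rw [fderiv_fun_sum fun i hi => (hF i hi x)]
  simp

private lemma contDiff_lapP {f : (Fin n → ℝ) → ℂ} (hf : ContDiff ℝ (⊤:ℕ∞) f) :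
    ContDiff ℝ (⊤:ℕ∞) (lapP f) := by
  unfold lapP
  exact ContDiff.sum fun j _ => contDiff_pd (contDiff_pd hf j) j

private lemma contDiff_lapP_iter {f : (Fin n → ℝ) → ℂ} (hf : ContDiff ℝ (⊤:ℕ∞) f) (m : ℕ) :
    ContDiff ℝ (⊤:ℕ∞) (lapP^[m] f) := by
  induction m with
  | zero => exact hf
  | succ k ih => rw [Function.iterate_succ_apply']; exact contDiff_lapP ih

private lemma pd_lapP_comm {f : (Fin n → ℝ) → ℂ} (hf : ContDiff ℝ (⊤:ℕ∞) f) (p : Fin n) :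
    pd p (lapP f) = lapP (pd p f) := by
  unfold lapP
  rw [pd_sum _ _ (fun j _ => diff_of_cd (contDiff_pd (contDiff_pd hf j) j)) p]
  funext x
  refine Finset.sum_congr rfl fun j _ => ?_
  rw [pd_comm (contDiff_pd hf j) p j, pd_comm hf p j]

private lemma pd_lapP_iter_comm {f : (Fin n → ℝ) → ℂ} (hf : ContDiff ℝ (⊤:ℕ∞) f)
    (p : Fin n) (m : ℕ) : pd p (lapP^[m] f) = lapP^[m] (pd p f) := by
  induction m with
  | zero => rfl
  | succ k ih =>
      rw [Function.iterate_succ_apply', Function.iterate_succ_apply',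
        pd_lapP_comm (contDiff_lapP_iter hf k) p, ih]

private lemma lapP_add_smul {g h : (Fin n → ℝ) → ℂ} (hg : ContDiff ℝ (⊤:ℕ∞) g)
    (hh : ContDiff ℝ (⊤:ℕ∞) h) (c : ℂ) :
    lapP (fun x => g x + c * h x) = fun x => lapP g x + c * lapP h x := by
  have hch : Differentiable ℝ (fun x => c * h x) := (diff_of_cd hh).const_mul c
  have hrw : ∀ j : Fin n, pd j (pd j (fun x => g x + c * h x))
      = fun x => pd j (pd j g) x + c * pd j (pd j h) x := by
    intro j
    rw [pd_add (diff_of_cd hg) hch j, pd_const_mul (diff_of_cd hh) c j]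
    rw [pd_add (diff_of_cd (contDiff_pd hg j)) ((diff_of_cd (contDiff_pd hh j)).const_mul c) j,
      pd_const_mul (diff_of_cd (contDiff_pd hh j)) c j]
  unfold lapP
  funext x
  simp only [hrw]
  rw [Finset.sum_add_distrib, ← Finset.mul_sum]

private lemma lapP_coord_mul {f : (Fin n → ℝ) → ℂ} (hf : ContDiff ℝ (⊤:ℕ∞) f)
    {p : Fin n} (hp : (p : ℕ) < n - 1) :
    lapP (fun x => ((x p : ℝ) : ℂ) * f x)
      = fun x => ((x p : ℝ) : ℂ) * lapP f x + 2 * pd p f x := by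
  have hterm : ∀ j : Fin n, pd j (pd j (fun x => ((x p : ℝ) : ℂ) * f x))
      = fun x => ((x p : ℝ) : ℂ) * pd j (pd j f) x
          + (if j = p then 2 * pd j f x else 0) := by
    intro j
    by_cases hj : j = p
    · rw [hj, pd_coord_mul (diff_of_cd hf) p p]
      have h1 : (fun x => ((x p : ℝ) : ℂ) * pd p f x + (if p = p then f x else 0))
          = fun x => ((x p : ℝ) : ℂ) * pd p f x + f x := by
        funext x; simp
      rw [h1, pd_add ((diff_of_cd (contDiff_coord p)).fun_mul (diff_of_cd (contDiff_pd hf p)))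
        (diff_of_cd hf) p, pd_coord_mul (diff_of_cd (contDiff_pd hf p)) p p]
      funext x
      simp
      ring
    · rw [pd_coord_mul (diff_of_cd hf) p j]
      have h1 : (fun x => ((x p : ℝ) : ℂ) * pd j f x + (if j = p then f x else 0))
          = fun x => ((x p : ℝ) : ℂ) * pd j f x := by
        funext x; simp [hj]
      rw [h1, pd_coord_mul (diff_of_cd (contDiff_pd hf j)) p j]
      funext x
      simp [hj]
  unfold lapP
  funext x
  simp only [hterm]
  rw [Finset.sum_add_distrib, ← Finset.mul_sum,
    Finset.sum_ite_eq' _ p (fun j => 2 * pd j f x),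
    if_pos (Finset.mem_filter.mpr ⟨Finset.mem_univ p, hp⟩)]

private lemma lapP_iter_coord_mul {f : (Fin n → ℝ) → ℂ} (hf : ContDiff ℝ (⊤:ℕ∞) f)
    {p : Fin n} (hp : (p : ℕ) < n - 1) (j : ℕ) :
    lapP^[j] (fun x => ((x p : ℝ) : ℂ) * f x)
      = fun x => ((x p : ℝ) : ℂ) * lapP^[j] f x
          + (2 * (j : ℂ)) * lapP^[j-1] (pd p f) x := by
  induction j with
  | zero => funext x; simp
  | succ k ih =>
      rw [Function.iterate_succ_apply', ih]
      have hA : ContDiff ℝ (⊤:ℕ∞) (lapP^[k] f) := contDiff_lapP_iter hf k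
      have hB : ContDiff ℝ (⊤:ℕ∞) (lapP^[k-1] (pd p f)) :=
        contDiff_lapP_iter (contDiff_pd hf p) (k-1)
      rw [lapP_add_smul ((contDiff_coord p).mul hA) hB (2 * (k : ℂ)),
        lapP_coord_mul hA hp]
      funext x
      rw [pd_lapP_iter_comm hf p k, ← Function.iterate_succ_apply' lapP k f]
      cases k with
      | zero => simp
      | succ m =>
          rw [Nat.add_sub_cancel, Nat.add_sub_cancel,
            ← Function.iterate_succ_apply' lapP m (pd p f)]
          push_cast
          ring

private lemma pdLast_eq' (hn : 0 < n) (f : (Fin n → ℝ) → ℂ) :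
    pdLast f = pd ⟨n - 1, by omega⟩ f := by
  simp [pdLast, hn]

private lemma pdLast_eq (hn : 0 < n) :
    (pdLast (n := n)) = pd ⟨n - 1, by omega⟩ := by
  funext f; simp [pdLast, hn]

private lemma contDiff_pdLast_iter (hn : 0 < n) {f : (Fin n → ℝ) → ℂ}
    (hf : ContDiff ℝ (⊤:ℕ∞) f) (k : ℕ) : ContDiff ℝ (⊤:ℕ∞) (pdLast^[k] f) := by
  induction k with
  | zero => exact hf
  | succ m ih => rw [Function.iterate_succ_apply', pdLast_eq' hn]; exact contDiff_pd ih _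

private lemma pdLast_iter_add_smul (hn : 0 < n) {g h : (Fin n → ℝ) → ℂ}
    (hg : ContDiff ℝ (⊤:ℕ∞) g) (hh : ContDiff ℝ (⊤:ℕ∞) h) (c : ℂ) (k : ℕ) :
    pdLast^[k] (fun x => g x + c * h x) = fun x => pdLast^[k] g x + c * pdLast^[k] h x := by
  induction k with
  | zero => rfl
  | succ m ih =>
      rw [Function.iterate_succ_apply', ih, Function.iterate_succ_apply',
        Function.iterate_succ_apply', pdLast_eq' hn, pdLast_eq' hn, pdLast_eq' hn,
        pd_add (diff_of_cd (contDiff_pdLast_iter hn hg m))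
          ((diff_of_cd (contDiff_pdLast_iter hn hh m)).const_mul c) _,
        pd_const_mul (diff_of_cd (contDiff_pdLast_iter hn hh m)) c _]

private lemma pdLast_coord_mul {f : (Fin n → ℝ) → ℂ} (hf : Differentiable ℝ f)
    {p : Fin n} (hp : (p : ℕ) < n - 1) :
    pdLast (fun x => ((x p : ℝ) : ℂ) * f x) = fun x => ((x p : ℝ) : ℂ) * pdLast f x := by
  have hn : 0 < n := by omega
  rw [pdLast_eq' hn, pdLast_eq' hn, pd_coord_mul hf p _]
  funext x
  rw [if_neg (by intro h; rw [Fin.ext_iff] at h; simp at h; omega)]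
  simp

private lemma pdLast_iter_coord_mul {f : (Fin n → ℝ) → ℂ} (hf : ContDiff ℝ (⊤:ℕ∞) f)
    {p : Fin n} (hp : (p : ℕ) < n - 1) (k : ℕ) :
    pdLast^[k] (fun x => ((x p : ℝ) : ℂ) * f x)
      = fun x => ((x p : ℝ) : ℂ) * pdLast^[k] f x := by
  have hn : 0 < n := by omega
  induction k with
  | zero => rfl
  | succ m ih =>
      rw [Function.iterate_succ_apply', ih,
        pdLast_coord_mul (diff_of_cd (contDiff_pdLast_iter hn hf m)) hp,
        ← Function.iterate_succ_apply' pdLast m f]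

private lemma key {f : (Fin n → ℝ) → ℂ} (hf : ContDiff ℝ (⊤:ℕ∞) f)
    {p : Fin n} (hp : (p : ℕ) < n - 1) (j k : ℕ) :
    pdLast^[k] (lapP^[j] (fun x => ((x p : ℝ) : ℂ) * f x)) 0
      = (2 * (j : ℂ)) * pdLast^[k] (lapP^[j-1] (pd p f)) 0 := by
  have hn : 0 < n := by omega
  rw [lapP_iter_coord_mul hf hp j,
    pdLast_iter_add_smul hn ((contDiff_coord p).mul (contDiff_lapP_iter hf j))
      (contDiff_lapP_iter (contDiff_pd hf p) (j-1)) _ k,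
    pdLast_iter_coord_mul (contDiff_lapP_iter hf j) hp k]
  simp

private lemma coeff_theta (g : Polynomial ℂ) (l m : ℕ) :
    (Polynomial.C (l:ℂ) * g - Polynomial.X * Polynomial.derivative g).coeff m
      = ((l:ℂ) - (m:ℂ)) * g.coeff m := by
  rcases m with _ | m
  · simp [Polynomial.coeff_sub, Polynomial.mul_coeff_zero]
  · rw [Polynomial.coeff_sub, Polynomial.coeff_C_mul, Polynomial.coeff_X_mul,
      Polynomial.coeff_derivative]
    push_cast
    ring

end Aux

/-- `x_p·((I_l g)(−Δ', ∂_n) δ) = ∂_p((I_{l−2}((l−θ)g))(−Δ', ∂_n) δ)` as tempered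
distributions on ℝ^n, tested against an arbitrary Schwartz function `φ`;
`(x_p·T)(φ) = T(x_p φ)` and `(∂_p T)(φ) = −T(∂_p φ)`, and θ = z d/dz. -/
theorem stmt8 (n : ℕ) (hn : 2 ≤ n) (p : Fin n) (hp : (p : ℕ) < n - 1)
    (l : ℕ) (a : ℕ → ℂ) (g : Polynomial ℂ)
    (hg : g = ∑ j ∈ Finset.range (l / 2 + 1), Polynomial.C (a j) * Polynomial.X ^ (l - 2 * j))
    (φ : SchwartzMap (Fin n → ℝ) ℂ) :
    IOpAct n (l : ℤ) g (fun x => (x p : ℂ) * φ x)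
      = -(IOpAct n ((l : ℤ) - 2)
          (Polynomial.C (l : ℂ) * g - Polynomial.X * Polynomial.derivative g) (pd p ⇑φ)) := by
  have hsm : ContDiff ℝ (⊤:ℕ∞) (⇑φ) := φ.smooth ⊤
  unfold IOpAct
  rw [if_pos (Int.natCast_nonneg l)]
  have h2 : (l : ℤ).toNat = l := Int.toNat_natCast l
  rw [h2]
  have hK : ∀ j : ℕ,
      (pdLast (n := n))^[l - 2*j] ((lapP (n := n))^[j] (fun x => ((x p : ℝ) : ℂ) * φ x)) 0
        = (2 * (j : ℂ)) * (pdLast (n := n))^[l - 2*j] ((lapP (n := n))^[j-1] (pd p ⇑φ)) 0 :=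
    fun j => key hsm hp j _
  simp only [hK]
  by_cases hl : 2 ≤ l
  · rw [if_pos (by omega)]
    have h3 : ((l : ℤ) - 2).toNat = l - 2 := by omega
    rw [h3]
    have hsplit : l / 2 + 1 = ((l - 2) / 2 + 1) + 1 := by omega
    rw [hsplit, Finset.sum_range_succ']
    have hzero : g.coeff (l - 2 * 0) * ((-1:ℂ)^0 * ((-1:ℂ)^(l - 2*0) *
        ((2 * ((0:ℕ) : ℂ)) * (pdLast (n := n))^[l - 2*0] ((lapP (n := n))^[0-1] (pd p ⇑φ)) 0)))
        = 0 := by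
      simp
    rw [hzero, add_zero, ← Finset.sum_neg_distrib]
    refine Finset.sum_congr rfl fun i hi => ?_
    have hib : i ≤ (l - 2) / 2 := by
      have := Finset.mem_range.mp hi; omega
    have h2il : 2 * i + 2 ≤ l := by omega
    have e1 : l - 2 * (i + 1) = l - 2 - 2 * i := by omega
    have e2 : (i + 1) - 1 = i := by omega
    rw [e1, e2, coeff_theta]
    have e4 : ((l - 2 - 2 * i : ℕ) : ℂ) = (l : ℂ) - 2 - 2 * (i : ℂ) := by
      have e3 : (l - 2 - 2 * i : ℕ) + (2 + 2 * i) = l := by omega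
      have := congrArg (fun t : ℕ => (t : ℂ)) e3
      push_cast at this
      linear_combination this
    rw [e4]
    push_cast
    ring
  · rw [if_neg (by omega)]
    have hl0 : l / 2 = 0 := by omega
    rw [hl0, Finset.sum_range_one]
    simp
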